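/- Let a_L be the Liouville 1-form on ℝ², a_L(x,y)(v) = x·v₂, with vector field X_L(x,y) = (−x, 0) spanning its kernel away from {x=0}. Let f be a smooth function near 0 ∈ ℝ² with f(0,0) = 0, ∂f/∂x(0,0) ≠ 0 and ∂f/∂y(0,0) ≠ 0 (so the zero curve of f is regular at the origin and transversal to both coordinate axes). Then there exist a local diffeomorphism φ at 0 with φ(0) = 0 and smooth nonvanishing functions κ, λ near 0 such that a_L = κ·φ*(a_L) and f = λ·((x + y) ∘ φ) near the origin. Consequently f·X_L is orbitally a_L-conjugate to (x + y)·X_L. -/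

import Mathlib

noncomputable section

open intervalIntegral MeasureTheory Metric

private def L0' : (ℝ × ℝ) →L[ℝ] ℝ × (ℝ × ℝ) :=
  ContinuousLinearMap.prod 0 (ContinuousLinearMap.prod 0 (ContinuousLinearMap.snd ℝ ℝ ℝ))

private def L1' : (ℝ × ℝ) →L[ℝ] ℝ × (ℝ × ℝ) :=
  ContinuousLinearMap.prod 0 (ContinuousLinearMap.prod (ContinuousLinearMap.fst ℝ ℝ ℝ) 0)

theorem key_param (n : ℕ) :
    ∀ {E : Type} [NormedAddCommGroup E] [NormedSpace ℝ E] [CompleteSpace E]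
      (H : ℝ × (ℝ × ℝ) → E), ContDiff ℝ (⊤:ℕ∞) H →
      ContDiff ℝ n (fun p : ℝ × ℝ => ∫ t in (0:ℝ)..1, H (t, (t * p.1, p.2))) := by
  induction n with
  | zero =>
    intro E _ _ _ H hH
    simp only [Nat.cast_zero, contDiff_zero]
    exact continuous_parametric_intervalIntegral_of_continuous'
      (f := fun (p : ℝ × ℝ) (t : ℝ) => H (t, (t * p.1, p.2)))
      (by apply hH.continuous.comp; fun_prop) 0 1
  | succ n ih =>
    intro E _ _ _ H hH
    set L : ℝ → (ℝ × ℝ) →L[ℝ] ℝ × (ℝ × ℝ) := fun t => L0' + t • L1' with hLdef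
    have hLapp : ∀ t (v : ℝ × ℝ), L t v = (0, (t * v.1, v.2)) := by
      intro t v
      simp [hLdef, L0', L1', ContinuousLinearMap.prod_apply]
    set H' : ℝ × (ℝ × ℝ) → (ℝ × ℝ) →L[ℝ] E := fun z => (fderiv ℝ H z).comp (L z.1) with hH'def
    have hH' : ContDiff ℝ (⊤:ℕ∞) H' := by
      apply ContDiff.clm_comp (hH.fderiv_right (m := (⊤:ℕ∞)) (by simp))
      exact contDiff_const.add ((contDiff_fst.smul contDiff_const))
    have hinner : ∀ (t : ℝ) (x : ℝ × ℝ),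
        HasFDerivAt (fun x : ℝ × ℝ => ((t, (t * x.1, x.2)) : ℝ × (ℝ × ℝ))) (L t) x := by
      intro t x
      have : (fun x : ℝ × ℝ => ((t, (t * x.1, x.2)) : ℝ × (ℝ × ℝ)))
          = fun x => ((t, ((0:ℝ), (0:ℝ))) : ℝ × (ℝ × ℝ)) + L t x := by
        funext x; simp [hLapp]
      rw [this]
      exact (L t).hasFDerivAt.const_add _
    have hdiff : ∀ (t : ℝ) (x : ℝ × ℝ),
        HasFDerivAt (fun x : ℝ × ℝ => H (t, (t * x.1, x.2))) (H' (t, (t * x.1, x.2))) x := by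
      intro t x
      have h1 := (hH.differentiable (by simp) (t, (t * x.1, x.2))).hasFDerivAt
      have := h1.comp x (hinner t x)
      exact this
    have key : ∀ p₀ : ℝ × ℝ, HasFDerivAt
        (fun p : ℝ × ℝ => ∫ t in (0:ℝ)..1, H (t, (t * p.1, p.2)))
        (∫ t in (0:ℝ)..1, H' (t, (t * p₀.1, p₀.2))) p₀ := by
      intro p₀
      haveI : SecondCountableTopologyEither ℝ ((ℝ × ℝ) →L[ℝ] E) :=
        secondCountableTopologyEither_of_left _ _
      obtain ⟨C, hC⟩ : ∃ C, ∀ w ∈ (Set.Icc (0:ℝ) 1) ×ˢ (closedBall p₀ 1),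
          ‖H' (w.1, (w.1 * w.2.1, w.2.2))‖ ≤ C := by
        apply IsCompact.exists_bound_of_continuousOn (isCompact_Icc.prod (isCompact_closedBall _ _))
        apply Continuous.continuousOn
        apply hH'.continuous.comp
        fun_prop
      apply intervalIntegral.hasFDerivAt_integral_of_dominated_of_fderiv_le
        (F := fun (x : ℝ × ℝ) (t : ℝ) => H (t, (t * x.1, x.2)))
        (F' := fun (x : ℝ × ℝ) (t : ℝ) => H' (t, (t * x.1, x.2)))
        (bound := fun _ => C) (s := ball p₀ 1) (ball_mem_nhds p₀ one_pos)
      · filter_upwards with x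
        exact ((hH.continuous.comp (by fun_prop : Continuous
          (fun t : ℝ => ((t, (t * x.1, x.2)) : ℝ × (ℝ × ℝ))))).aestronglyMeasurable)
      · exact ((hH.continuous.comp (by fun_prop : Continuous
          (fun t : ℝ => ((t, (t * p₀.1, p₀.2)) : ℝ × (ℝ × ℝ))))).intervalIntegrable 0 1)
      · exact ((hH'.continuous.comp (by fun_prop : Continuous
          (fun t : ℝ => ((t, (t * p₀.1, p₀.2)) : ℝ × (ℝ × ℝ))))).aestronglyMeasurable)
      · filter_upwards with t ht x hx
        rw [Set.uIoc_of_le (by norm_num : (0:ℝ) ≤ 1)] at ht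
        exact hC (t, x) ⟨Set.mem_Icc.2 ⟨le_of_lt ht.1, ht.2⟩, ball_subset_closedBall hx⟩
      · exact intervalIntegrable_const
      · filter_upwards with t _ x _
        exact hdiff t x
    have hDiff : Differentiable ℝ (fun p : ℝ × ℝ => ∫ t in (0:ℝ)..1, H (t, (t * p.1, p.2))) :=
      fun p₀ => (key p₀).differentiableAt
    have hfd : (fderiv ℝ (fun p : ℝ × ℝ => ∫ t in (0:ℝ)..1, H (t, (t * p.1, p.2))))
        = fun p₀ => ∫ t in (0:ℝ)..1, H' (t, (t * p₀.1, p₀.2)) := by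
      funext p₀; exact (key p₀).fderiv
    have : ((n + 1 : ℕ) : WithTop ℕ∞) = (n : WithTop ℕ∞) + 1 := by push_cast; rfl
    rw [this, contDiff_succ_iff_fderiv]
    refine ⟨hDiff, by simp, ?_⟩
    rw [hfd]
    exact ih H' hH'

def hadA (g : ℝ × ℝ → ℝ) : ℝ × ℝ → ℝ :=
  fun p => ∫ t in (0:ℝ)..1, (fderiv ℝ g (t * p.1, p.2)) (1, 0)

theorem hadA_contDiff {g : ℝ × ℝ → ℝ} (hg : ContDiff ℝ (⊤:ℕ∞) g) :
    ContDiff ℝ (⊤:ℕ∞) (hadA g) := by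
  have hH : ContDiff ℝ (⊤:ℕ∞) (fun z : ℝ × (ℝ × ℝ) => (fderiv ℝ g z.2) (1, 0)) :=
    ContDiff.clm_apply ((hg.fderiv_right (m := (⊤:ℕ∞)) (by simp)).comp contDiff_snd) contDiff_const
  rw [contDiff_infty]
  intro n
  exact key_param n _ hH

theorem hadA_spec {g : ℝ × ℝ → ℝ} (hg : ContDiff ℝ (⊤:ℕ∞) g) (p : ℝ × ℝ) :
    p.1 * hadA g p = g p - g (0, p.2) := by
  have hc : ∀ t : ℝ, HasDerivAt (fun t : ℝ => g (t * p.1, p.2))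
      (p.1 * (fderiv ℝ g (t * p.1, p.2)) (1, 0)) t := by
    intro t
    have hi : HasDerivAt (fun t : ℝ => ((t * p.1, p.2) : ℝ × ℝ)) ((p.1, 0)) t :=
      (hasDerivAt_mul_const p.1).prodMk (hasDerivAt_const t p.2)
    have hgd := (hg.differentiable (by simp) (t * p.1, p.2)).hasFDerivAt
    have := hgd.comp_hasDerivAt t hi
    have h2 : (fderiv ℝ g (t * p.1, p.2)) (p.1, 0)
        = p.1 * (fderiv ℝ g (t * p.1, p.2)) (1, 0) := by
      have : ((p.1, 0) : ℝ × ℝ) = p.1 • ((1, 0) : ℝ × ℝ) := by simp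
      rw [this, ContinuousLinearMap.map_smul, smul_eq_mul]
    rwa [h2] at this
  have hcont : Continuous (fun t : ℝ => p.1 * (fderiv ℝ g (t * p.1, p.2)) (1, 0)) := by
    apply Continuous.mul continuous_const
    apply Continuous.clm_apply _ continuous_const
    exact ((hg.fderiv_right (m := (⊤:ℕ∞)) (by simp)).continuous.comp (by fun_prop))
  have := intervalIntegral.integral_eq_sub_of_hasDerivAt
    (f := fun t : ℝ => g (t * p.1, p.2)) (a := 0) (b := 1)
    (fun t _ => hc t) (hcont.intervalIntegrable 0 1)
  rw [intervalIntegral.integral_const_mul] at this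
  simpa [hadA] using this

theorem hadA_zero {g : ℝ × ℝ → ℝ} : hadA g 0 = fderiv ℝ g 0 (1, 0) := by
  simp [hadA]
  rfl

theorem smooth_local_extension {U : Set (ℝ × ℝ)} (hUo : IsOpen U) (hU0 : (0:ℝ×ℝ) ∈ U)
    {f : ℝ × ℝ → ℝ} (hf : ContDiffOn ℝ (⊤ : ℕ∞) f U) :
    ∃ g : ℝ × ℝ → ℝ, ContDiff ℝ (⊤:ℕ∞) g ∧ g =ᶠ[nhds 0] f := by
  obtain ⟨ε, hε, hball⟩ := Metric.isOpen_iff.1 hUo 0 hU0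
  set χ : ContDiffBump (0:ℝ×ℝ) := ⟨ε/4, ε/2, by positivity, by linarith⟩ with hχ
  have hrOut : χ.rOut = ε/2 := rfl
  have hrIn : χ.rIn = ε/4 := rfl
  have hsupp : tsupport χ ⊆ U := by
    rw [χ.tsupport_eq, hrOut]
    exact (closedBall_subset_ball (by linarith)).trans hball
  set g : ℝ × ℝ → ℝ := fun p => χ p * U.indicator f p with hg
  refine ⟨g, ?_, ?_⟩
  · rw [contDiff_iff_contDiffAt]
    intro p
    by_cases hp : p ∈ U
    · have h1 : ContDiffAt ℝ (⊤:ℕ∞) (fun q => χ q * f q) p :=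
        χ.contDiffAt.mul (hf.contDiffAt (hUo.mem_nhds hp))
      apply h1.congr_of_eventuallyEq
      filter_upwards [hUo.mem_nhds hp] with q hq
      simp [hg, Set.indicator_of_mem hq]
    · have hp' : p ∉ tsupport χ := fun h => hp (hsupp h)
      have h0 : ContDiffAt ℝ (⊤:ℕ∞) (fun _ : ℝ × ℝ => (0:ℝ)) p := contDiffAt_const
      apply h0.congr_of_eventuallyEq
      filter_upwards [(isClosed_tsupport χ).isOpen_compl.mem_nhds hp'] with q hq
      simp [hg, image_eq_zero_of_notMem_tsupport hq]
  · filter_upwards [ball_mem_nhds (0:ℝ×ℝ) (by positivity : (0:ℝ) < ε/4)] with q hq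
    have h1 : χ q = 1 := χ.one_of_mem_closedBall (by rw [hrIn]; exact ball_subset_closedBall hq)
    have h2 : q ∈ U := hball (ball_subset_ball (by linarith) hq)
    simp [hg, h1, Set.indicator_of_mem h2]

theorem det_aux (T : (ℝ×ℝ) →L[ℝ] ℝ×ℝ) (a b d : ℝ)
    (hT : ∀ v : ℝ×ℝ, T v = (v.1 * a + v.2 * b, d * v.2)) : T.det = a * d := by
  have h : T.det = Matrix.det (LinearMap.toMatrix (Module.Basis.finTwoProd ℝ) (Module.Basis.finTwoProd ℝ)
      (T : (ℝ×ℝ) →ₗ[ℝ] ℝ×ℝ)) := (LinearMap.det_toMatrix _ _).symm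
  rw [h, Matrix.det_fin_two]
  simp [LinearMap.toMatrix_apply, Module.Basis.finTwoProd_zero, Module.Basis.finTwoProd_one,
    Module.Basis.coe_finTwoProd_repr, hT]


/-- The Liouville 1-form `a_L(x,y)(v) = x·v₂`. -/
def aL : ℝ × ℝ → ((ℝ × ℝ) →L[ℝ] ℝ) :=
  fun p => p.1 • ContinuousLinearMap.snd ℝ ℝ ℝ

/-- The vector field `X_L(x,y) = (−x, 0)` spanning the kernel of the Liouville
1-form away from `{x = 0}`. -/
def XL : ℝ × ℝ → ℝ × ℝ := fun p => (-p.1, 0)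

/-- If `f` is smooth near `0 ∈ ℝ²` with `f(0,0) = 0`, `∂f/∂x(0,0) ≠ 0` and
`∂f/∂y(0,0) ≠ 0` (zero curve regular at the origin and transversal to both axes),
then there are a local diffeomorphism `φ` fixing `0` and smooth nonvanishing
`κ, λ` with `a_L = κ·φ*(a_L)` and `f = λ·((x+y) ∘ φ)` near the origin.
Consequently `f·X_L` is orbitally `a_L`-conjugate to `(x+y)·X_L`. -/
theorem stmt_13 (U : Set (ℝ × ℝ)) (hUo : IsOpen U) (hU0 : (0 : ℝ × ℝ) ∈ U)
    (f : ℝ × ℝ → ℝ) (hf : ContDiffOn ℝ (⊤ : ℕ∞) f U)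
    (hf0 : f 0 = 0)
    (hfx : fderiv ℝ f 0 (1, 0) ≠ 0) (hfy : fderiv ℝ f 0 (0, 1) ≠ 0) :
    ∃ (φ : ℝ × ℝ → ℝ × ℝ) (W : Set (ℝ × ℝ)) (κ lam : ℝ × ℝ → ℝ),
      IsOpen W ∧ (0 : ℝ × ℝ) ∈ W ∧ φ 0 = 0 ∧
      ContDiffOn ℝ (⊤ : ℕ∞) φ W ∧ (∀ p ∈ W, (fderiv ℝ φ p).det ≠ 0) ∧
      ContDiffOn ℝ (⊤ : ℕ∞) κ W ∧ (∀ p ∈ W, κ p ≠ 0) ∧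
      ContDiffOn ℝ (⊤ : ℕ∞) lam W ∧ (∀ p ∈ W, lam p ≠ 0) ∧
      -- a_L = κ·φ*(a_L)
      (∀ p ∈ W, aL p = κ p • ((aL (φ p)).comp (fderiv ℝ φ p))) ∧
      -- f = λ·((x+y) ∘ φ)
      (∀ p ∈ W, f p = lam p * ((φ p).1 + (φ p).2)) ∧
      -- consequently f·X_L is orbitally a_L-conjugate to (x+y)·X_L
      (∃ μ : ℝ × ℝ → ℝ, ContDiffOn ℝ (⊤ : ℕ∞) μ W ∧ (∀ p ∈ W, μ p ≠ 0) ∧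
        ∀ p ∈ W, f p • XL p =
          μ p • (fderiv ℝ φ p).inverse (((φ p).1 + (φ p).2) • XL (φ p))) := by
  obtain ⟨g, hg, hgf⟩ := smooth_local_extension hUo hU0 hf
  have hg0 : g 0 = 0 := hgf.self_of_nhds.trans hf0
  have hfdeq : fderiv ℝ g 0 = fderiv ℝ f 0 := hgf.fderiv_eq
  set A : ℝ × ℝ → ℝ := hadA g with hAdef
  have hA : ContDiff ℝ (⊤:ℕ∞) A := hadA_contDiff hg
  have hA0 : A 0 = fderiv ℝ f 0 (1, 0) := by rw [hAdef, hadA_zero, hfdeq]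
  have hA0ne : A 0 ≠ 0 := by rw [hA0]; exact hfx
  set φ₁ : ℝ × ℝ → ℝ := fun p => p.1 * A p with hφ₁def
  set φ₂ : ℝ × ℝ → ℝ := fun p => g (0, p.2) with hφ₂def
  set φ : ℝ × ℝ → ℝ × ℝ := fun p => (φ₁ p, φ₂ p) with hφdef
  have hφ₁ : ContDiff ℝ (⊤:ℕ∞) φ₁ := contDiff_fst.mul hA
  have hφ₂ : ContDiff ℝ (⊤:ℕ∞) φ₂ := hg.comp (contDiff_const.prodMk contDiff_snd)
  have hφ : ContDiff ℝ (⊤:ℕ∞) φ := hφ₁.prodMk hφ₂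
  have hsum : ∀ p : ℝ × ℝ, φ₁ p + φ₂ p = g p := by
    intro p
    have h := hadA_spec hg p
    simp only [hφ₁def, hφ₂def, ← hAdef] at h ⊢
    linarith
  set α : ℝ × ℝ → ℝ := fun p => fderiv ℝ φ₁ p (1, 0) with hαdef
  have hα : ContDiff ℝ (⊤:ℕ∞) α :=
    ContDiff.clm_apply (hφ₁.fderiv_right (m := (⊤:ℕ∞)) (by simp)) contDiff_const
  set δ : ℝ × ℝ → ℝ := fun p => fderiv ℝ g (0, p.2) (0, 1) with hδdef
  have hδ : ContDiff ℝ (⊤:ℕ∞) δ :=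
    ContDiff.clm_apply ((hg.fderiv_right (m := (⊤:ℕ∞)) (by simp)).comp
      (contDiff_const.prodMk contDiff_snd)) contDiff_const
  have hα0 : α 0 = A 0 := by
    have hd1 : DifferentiableAt ℝ (fun p : ℝ × ℝ => p.1) (0 : ℝ × ℝ) := differentiableAt_fst
    have hd2 : DifferentiableAt ℝ A (0 : ℝ × ℝ) :=
      (hA.differentiable (by simp)) 0
    have h := fderiv_fun_mul hd1 hd2
    rw [hαdef]
    simp only [hφ₁def]
    rw [h]
    simp [fderiv_fst]
  have hα0ne : α 0 ≠ 0 := by rw [hα0]; exact hA0ne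
  have hδ0 : δ 0 = fderiv ℝ f 0 (0, 1) := by
    rw [hδdef]
    simp only [Prod.snd_zero]
    rw [show ((0:ℝ), (0:ℝ)) = (0 : ℝ × ℝ) from rfl, hfdeq]
  have hδ0ne : δ 0 ≠ 0 := by rw [hδ0]; exact hfy
  obtain ⟨V, hVsub, hVo, hV0⟩ := _root_.mem_nhds_iff.mp hgf
  set W : Set (ℝ × ℝ) := ((α ⁻¹' {0}ᶜ) ∩ (δ ⁻¹' {0}ᶜ) ∩ (A ⁻¹' {0}ᶜ)) ∩ V with hWdef
  have hWo : IsOpen W :=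
    (((isOpen_compl_singleton.preimage hα.continuous).inter
      (isOpen_compl_singleton.preimage hδ.continuous)).inter
      (isOpen_compl_singleton.preimage hA.continuous)).inter hVo
  have hW0 : (0 : ℝ × ℝ) ∈ W := ⟨⟨⟨hα0ne, hδ0ne⟩, hA0ne⟩, hV0⟩
  -- derivative of φ
  set G : (ℝ × ℝ) →L[ℝ] ℝ × ℝ :=
    ContinuousLinearMap.prod 0 (ContinuousLinearMap.snd ℝ ℝ ℝ) with hGdef
  have hφ₂d : ∀ p : ℝ × ℝ, HasFDerivAt φ₂ ((fderiv ℝ g (0, p.2)).comp G) p := by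
    intro p
    have h1 := ((hg.differentiable (by simp)) (0, p.2)).hasFDerivAt
    have h2 : HasFDerivAt (fun q : ℝ × ℝ => (((0:ℝ), q.2) : ℝ × ℝ)) G p := by
      have := G.hasFDerivAt (x := p)
      apply this.congr_of_eventuallyEq
      filter_upwards with q
      simp [hGdef]
    exact h1.comp p h2
  have hTfd : ∀ p : ℝ × ℝ, fderiv ℝ φ p
      = (fderiv ℝ φ₁ p).prod ((fderiv ℝ g (0, p.2)).comp G) := by
    intro p
    exact (((hφ₁.differentiable (by simp) p).hasFDerivAt).prodMk (hφ₂d p)).fderiv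
  have hTv : ∀ (p v : ℝ × ℝ), fderiv ℝ φ p v = (fderiv ℝ φ₁ p v, δ p * v.2) := by
    intro p v
    rw [hTfd p]
    have h3 : (fderiv ℝ g (0, p.2)) (G v) = δ p * v.2 := by
      have hGv : G v = ((0:ℝ), v.2) := by simp [hGdef]
      have h4 : ((0:ℝ), v.2) = v.2 • (((0:ℝ), (1:ℝ)) : ℝ × ℝ) := by simp
      rw [hGv, h4, ContinuousLinearMap.map_smul, smul_eq_mul, hδdef, mul_comm]
    simp [ContinuousLinearMap.prod_apply, h3]
  have hD₁ : ∀ (p v : ℝ × ℝ), fderiv ℝ φ₁ p v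
      = v.1 * α p + v.2 * (fderiv ℝ φ₁ p (0, 1)) := by
    intro p v
    have hv : v = v.1 • (((1:ℝ), (0:ℝ)) : ℝ × ℝ) + v.2 • (((0:ℝ), (1:ℝ)) : ℝ × ℝ) := by
      ext <;> simp
    conv_lhs => rw [hv]
    rw [map_add, ContinuousLinearMap.map_smul, ContinuousLinearMap.map_smul]
    simp [hαdef, smul_eq_mul]
  have hdet : ∀ p : ℝ × ℝ, (fderiv ℝ φ p).det = α p * δ p := by
    intro p
    apply det_aux _ _ (fderiv ℝ φ₁ p (0, 1)) _
    intro v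
    rw [hTv p v, hD₁ p v]
  set κ : ℝ × ℝ → ℝ := fun p => (A p * δ p)⁻¹ with hκdef
  set lam : ℝ × ℝ → ℝ := fun _ => (1:ℝ) with hlamdef
  set μf : ℝ × ℝ → ℝ := fun p => α p / A p with hμdef
  refine ⟨φ, W, κ, lam, hWo, hW0, ?_, hφ.contDiffOn, ?_, ?_, ?_, ?_, ?_, ?_, ?_, ?_⟩
  · -- φ 0 = 0
    simp only [hφdef, hφ₁def, hφ₂def]
    rw [show ((0:ℝ×ℝ).1 : ℝ) = 0 from rfl]
    rw [show ((0:ℝ), (0:ℝ×ℝ).2) = (0 : ℝ × ℝ) from rfl, hg0]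
    simp
  · -- det ≠ 0
    intro p hp
    rw [hdet p]
    exact mul_ne_zero hp.1.1.1 hp.1.1.2
  · -- κ smooth
    exact ContDiffOn.inv ((hA.mul hδ).contDiffOn) (fun p hp => mul_ne_zero hp.1.2 hp.1.1.2)
  · -- κ ≠ 0
    intro p hp
    exact inv_ne_zero (mul_ne_zero hp.1.2 hp.1.1.2)
  · exact contDiffOn_const
  · intro p _; exact one_ne_zero
  · -- aL condition
    intro p hp
    have hAp : A p ≠ 0 := hp.1.2
    have hδp : δ p ≠ 0 := hp.1.1.2
    apply ContinuousLinearMap.ext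
    intro v
    have h1 : aL p v = p.1 * v.2 := by simp [aL]
    have h2 : (κ p • ((aL (φ p)).comp (fderiv ℝ φ p))) v
        = κ p * ((φ p).1 * (fderiv ℝ φ p v).2) := by
      simp [aL, ContinuousLinearMap.comp_apply]
      try ring
    rw [h1, h2, hTv p v]
    show p.1 * v.2 = κ p * (φ₁ p * (δ p * v.2))
    rw [hκdef, hφ₁def]
    field_simp
  · -- f = lam * (φ₁ + φ₂)
    intro p hp
    have : g p = f p := hVsub hp.2
    rw [← this, hlamdef]
    show g p = 1 * (φ₁ p + φ₂ p)
    rw [one_mul, hsum p]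
  · -- the conjugacy
    refine ⟨μf, ?_, ?_, ?_⟩
    · exact ContDiffOn.div hα.contDiffOn hA.contDiffOn (fun p hp => hp.1.2)
    · intro p hp
      exact div_ne_zero hp.1.1.1 hp.1.2
    · intro p hp
      obtain ⟨⟨⟨hαp, hδp⟩, hAp⟩, hVp⟩ := hp
      have hαp : α p ≠ 0 := hαp
      have hδp : δ p ≠ 0 := hδp
      have hAp : A p ≠ 0 := hAp
      have hfg : f p = g p := (hVsub hVp).symm
      have hdetp : (fderiv ℝ φ p).det ≠ 0 := by rw [hdet p]; exact mul_ne_zero hαp hδp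
      set eL := (fderiv ℝ φ p).toContinuousLinearEquivOfDetNeZero hdetp with heL
      have hinv : (fderiv ℝ φ p).inverse = (eL.symm : (ℝ×ℝ) →L[ℝ] ℝ×ℝ) := by
        rw [show fderiv ℝ φ p = (eL : (ℝ×ℝ) →L[ℝ] ℝ×ℝ) from
          ((fderiv ℝ φ p).coe_toContinuousLinearEquivOfDetNeZero hdetp).symm]
        exact ContinuousLinearMap.inverse_equiv eL
      set w : ℝ × ℝ := ((-(g p * (p.1 * A p))) / α p, 0) with hwdef
      have hTw : fderiv ℝ φ p w = ((φ₁ p + φ₂ p) • XL (φ p)) := by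
        rw [hTv p w, hD₁ p w, hsum p]
        show ((-(g p * (p.1 * A p))) / α p * α p + 0 * _, δ p * 0)
          = g p • ((-(φ₁ p), (0:ℝ)) : ℝ × ℝ)
      -- continue
        rw [div_mul_cancel₀ _ hαp]
        simp [hφ₁def, Prod.smul_mk, smul_eq_mul]
        try ring
      have hsymm : eL.symm ((φ₁ p + φ₂ p) • XL (φ p)) = w := by
        rw [ContinuousLinearEquiv.symm_apply_eq, ← hTw]
        exact ((fderiv ℝ φ p).toContinuousLinearEquivOfDetNeZero_apply hdetp w).symm
      rw [hinv]
      show f p • XL p = μf p • eL.symm ((φ₁ p + φ₂ p) • XL (φ p))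
      rw [hsymm, hfg]
      show g p • ((-p.1, (0:ℝ)) : ℝ × ℝ) = μf p • w
      rw [hwdef, hμdef]
      ext
      · show g p * (-p.1) = (α p / A p) * ((-(g p * (p.1 * A p))) / α p)
        field_simp
        try ring
      · show g p * (0:ℝ) = (α p / A p) * 0
        simp
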